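/- Take t_i = ω^{−i} and a_i = ⟨ν^i α, β⟩ for 1 ≤ i ≤ m, where ω is a primitive m-th root of unity and ν an isometry of the even lattice Q of order m. If r ∈ ℤ_m satisfies ⟨ν^r α, β⟩ = −2, then ∑_{p ∈ ℤ_m, p≠r} ⟨ν^p α, β⟩ = ∑_{p ∈ ℤ_m, p≠0} ⟨(ν^p + ν^{−p}) ν^r α, β⟩ / (1 − ω^p). -/

import Mathlib

open Finset

/-- The standard bilinear form on `ℤ^N`. -/
def form {N : ℕ} (α β : Fin N → ℤ) : ℤ := ∑ k, α k * β k

/-- If `r ∈ ℤ_m` satisfies `⟨ν^r α, β⟩ = −2`, then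
`∑_{p ∈ ℤ_m, p ≠ r} ⟨ν^p α, β⟩ = ∑_{p ∈ ℤ_m, p ≠ 0} ⟨(ν^p + ν^{−p})ν^r α, β⟩/(1 − ω^p)`,
where `ω` is a primitive `m`-th root of unity and `ν` an isometry of the even
lattice `Q` with `ν^m = Id`. -/
theorem sum_form_eq_sum_div (N m : ℕ) (hm : 0 < m) (ω : ℂ)
    (hω : IsPrimitiveRoot ω m)
    (Q : AddSubgroup (Fin N → ℤ))
    (hQeven : ∀ α ∈ Q, Even (form α α))
    (ν : AddAut (Fin N → ℤ))
    (hiso : ∀ α β, form (ν α) (ν β) = form α β)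
    (hνQ : ∀ α ∈ Q, ν α ∈ Q)
    (hord : m • ν = 0)
    (α : Fin N → ℤ) (hα : α ∈ Q) (β : Fin N → ℤ) (hβ : β ∈ Q)
    (r : ℕ) (hr : r < m) (h2 : form ((r • ν) α) β = -2) :
    ((∑ p ∈ (Finset.range m).erase r, form ((p • ν) α) β : ℤ) : ℂ)
      = ∑ p ∈ Finset.Ioo 0 m,
          ((form ((p • ν) ((r • ν) α)) β
              + form (((-(p : ℤ)) • ν) ((r • ν) α)) β : ℤ) : ℂ)
            / (1 - ω ^ p) := by
  set a : ℕ → ℤ := fun p => form ((p • ν) α) β with ha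
  have hper : ∀ p, a (p + m) = a p := by
    intro p
    simp only [ha, add_nsmul, hord, add_zero]
  -- shift invariance of full-period sums
  have key : ∀ s, ∑ p ∈ Finset.range m, a (p + s) = ∑ p ∈ Finset.range m, a p := by
    intro s
    induction s with
    | zero => simp
    | succ s ih =>
      have h1 : ∑ p ∈ Finset.range m, a (p + (s + 1))
          = ∑ p ∈ Finset.range m, a ((p + 1) + s) := by
        apply Finset.sum_congr rfl; intro p _; congr 1; omega
      have h2 := Finset.sum_range_succ' (fun p => a (p + s)) m
      have h3 := Finset.sum_range_succ (fun p => a (p + s)) m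
      have h4 : a (m + s) = a s := by rw [Nat.add_comm]; exact hper s
      have h5 : ∑ p ∈ Finset.range m, a ((p + 1) + s)
          = ∑ p ∈ Finset.range m, a (p + s) := by
        simp only [h3, h4, Nat.zero_add] at h2
        linarith
      rw [h1, h5, ih]
  set S : ℤ := ∑ p ∈ Finset.range m, a p with hS
  -- LHS
  have hrmem : r ∈ Finset.range m := Finset.mem_range.mpr hr
  have hLHS : ∑ p ∈ (Finset.range m).erase r, a p = S - a r := by
    have := Finset.add_sum_erase (Finset.range m) a hrmem
    linarith
  -- identify RHS summand
  have hIoo : ∀ p ∈ Finset.Ioo 0 m,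
      (form ((p • ν) ((r • ν) α)) β + form (((-(p : ℤ)) • ν) ((r • ν) α)) β : ℤ)
        = a (p + r) + a (m - p + r) := by
    intro p hp
    rw [Finset.mem_Ioo] at hp
    have e1 : (p • ν) ((r • ν) α) = ((p + r) • ν) α := by
      rw [add_nsmul]; rfl
    have hinv : -(p • ν) = (m - p) • ν := by
      apply neg_eq_of_add_eq_zero_left
      rw [← add_nsmul, Nat.sub_add_cancel hp.2.le, hord]
    have e2 : (((-(p : ℤ))) • ν) ((r • ν) α) = ((m - p + r) • ν) α := by
      rw [neg_zsmul, natCast_zsmul, hinv, add_nsmul]; rfl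
    rw [e1, e2]
  -- the reindexing involution p ↦ m - p on Ioo 0 m
  have hre : ∀ (g : ℕ → ℂ), ∑ p ∈ Finset.Ioo 0 m, g p = ∑ p ∈ Finset.Ioo 0 m, g (m - p) := by
    intro g
    refine Finset.sum_nbij' (fun p => m - p) (fun p => m - p) ?_ ?_ ?_ ?_ ?_
    · intro p hp; simp only [Finset.mem_Ioo] at *; omega
    · intro p hp; simp only [Finset.mem_Ioo] at *; omega
    · intro p hp; simp only [Finset.mem_Ioo] at hp; omega
    · intro p hp; simp only [Finset.mem_Ioo] at hp; omega
    · intro p hp; simp only [Finset.mem_Ioo] at hp; congr 1; omega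
  -- complex key identity
  have hroot : ∀ p ∈ Finset.Ioo 0 m, (1 : ℂ) - ω ^ p ≠ 0 := by
    intro p hp
    rw [Finset.mem_Ioo] at hp
    have := hω.pow_ne_one_of_pos_of_lt hp.1.ne' hp.2
    intro h; exact this (by linear_combination -h)
  have hhalf : ∀ p ∈ Finset.Ioo 0 m,
      1 / (1 - ω ^ p) + 1 / (1 - ω ^ (m - p)) = 1 := by
    intro p hp
    rw [Finset.mem_Ioo] at hp
    have hmul : ω ^ (m - p) * ω ^ p = 1 := by
      rw [← pow_add, Nat.sub_add_cancel hp.2.le, hω.pow_eq_one]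
    have h1 := hroot p (Finset.mem_Ioo.mpr hp)
    have h2 := hroot (m - p) (Finset.mem_Ioo.mpr (by omega))
    field_simp
    linear_combination -hmul
  -- define f
  set f : ℕ → ℂ := fun p => ((a (p + r) + a (m - p + r) : ℤ) : ℂ) with hf
  have hfsymm : ∀ p ∈ Finset.Ioo 0 m, f (m - p) = f p := by
    intro p hp
    rw [Finset.mem_Ioo] at hp
    have e1 : m - (m - p) = p := by omega
    simp only [hf, e1]
    push_cast
    ring
  set T : ℂ := ∑ p ∈ Finset.Ioo 0 m, f p / (1 - ω ^ p) with hT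
  have hRHS : (∑ p ∈ Finset.Ioo 0 m,
      ((form ((p • ν) ((r • ν) α)) β + form (((-(p : ℤ)) • ν) ((r • ν) α)) β : ℤ) : ℂ)
        / (1 - ω ^ p)) = T := by
    apply Finset.sum_congr rfl
    intro p hp
    rw [hIoo p hp]
  have hT2 : 2 * T = ∑ p ∈ Finset.Ioo 0 m, f p := by
    have hre1 : T = ∑ p ∈ Finset.Ioo 0 m, f (m - p) / (1 - ω ^ (m - p)) :=
      hre (fun p => f p / (1 - ω ^ p))
    calc 2 * T = T + T := by ring
    _ = (∑ p ∈ Finset.Ioo 0 m, f p / (1 - ω ^ p))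
          + ∑ p ∈ Finset.Ioo 0 m, f (m - p) / (1 - ω ^ (m - p)) :=
        congrArg₂ (· + ·) hT hre1
    _ = ∑ p ∈ Finset.Ioo 0 m, (f p / (1 - ω ^ p) + f p / (1 - ω ^ (m - p))) := by
        rw [← Finset.sum_add_distrib]
        apply Finset.sum_congr rfl
        intro p hp
        rw [hfsymm p hp]
    _ = ∑ p ∈ Finset.Ioo 0 m, f p := by
        apply Finset.sum_congr rfl
        intro p hp
        have := hhalf p hp
        field_simp at this ⊢
        linear_combination f p * this
  -- sum of f
  have hIooRange : Finset.Ioo 0 m = (Finset.range m).erase 0 := by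
    ext x; simp [Finset.mem_Ioo, Finset.mem_erase, Finset.mem_range]; omega
  have hsum1 : ∑ p ∈ Finset.Ioo 0 m, a (p + r) = S - a r := by
    have h0 : (0 : ℕ) ∈ Finset.range m := Finset.mem_range.mpr hm
    have := Finset.add_sum_erase (Finset.range m) (fun p => a (p + r)) h0
    rw [key r] at this
    rw [hIooRange]
    simp only [Nat.zero_add] at this
    linarith
  have hsum2 : ∑ p ∈ Finset.Ioo 0 m, f p = 2 * ((S : ℂ) - (a r : ℂ)) := by
    have hre2 : ∑ p ∈ Finset.Ioo 0 m, ((a (m - p + r) : ℤ) : ℂ)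
        = ∑ p ∈ Finset.Ioo 0 m, ((a (p + r) : ℤ) : ℂ) := by
      rw [hre (fun p => ((a (m - p + r) : ℤ) : ℂ))]
      apply Finset.sum_congr rfl
      intro p hp
      rw [Finset.mem_Ioo] at hp
      congr 2
      omega
    have hc : ∑ p ∈ Finset.Ioo 0 m, ((a (p + r) : ℤ) : ℂ) = ((S - a r : ℤ) : ℂ) := by
      rw [← hsum1]; push_cast; rfl
    simp only [hf]
    push_cast
    rw [Finset.sum_add_distrib]
    push_cast at hre2 hc
    rw [hre2, hc]
    ring
  rw [hRHS, hLHS]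
  have : 2 * T = 2 * ((S : ℂ) - (a r : ℂ)) := by rw [hT2, hsum2]
  have h2ne : (2 : ℂ) ≠ 0 := two_ne_zero
  field_simp at this
  push_cast
  exact this.symm
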